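/- For all integers m, n with 1 ≤ n ≤ m, the monochromatic tree partition number of the 2-edge-colored complete bipartite graph K(m,n) satisfies t_2(K(m,n)) = ⌊(m − 2)/2^n⌋ + 2. That is, every 2-edge-coloring of K(m,n) admits a partition of its vertex set into at most ⌊(m − 2)/2^n⌋ + 2 vertex-disjoint monochromatic trees, and there is a 2-edge-coloring of K(m,n) for which no partition into fewer vertex-disjoint monochromatic trees exists. -/

import Mathlib

/-!
Common definitions for edge-colored complete bipartite graphs.

The complete bipartite graph `K(A,B)` with partite sets `α` and `β` is modeled on the
vertex type `α ⊕ β`; an edge-coloring with color type `γ` is a function `c : α → β → γ`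
(giving the color of the edge between `a : α` and `b : β`).
-/

/-- The spanning subgraph of the complete bipartite graph on parts `α`, `β` consisting of
the edges of color `k`, under the edge-coloring `c`. -/
def biColorGraph {α β γ : Type*} (c : α → β → γ) (k : γ) : SimpleGraph (α ⊕ β) where
  Adj x y := (∃ a b, x = Sum.inl a ∧ y = Sum.inr b ∧ c a b = k) ∨
             (∃ a b, x = Sum.inr b ∧ y = Sum.inl a ∧ c a b = k)
  symm := by
    constructor
    rintro x y (⟨a, b, hx, hy, hc⟩ | ⟨a, b, hx, hy, hc⟩)
    · exact Or.inr ⟨a, b, hy, hx, hc⟩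
    · exact Or.inl ⟨a, b, hy, hx, hc⟩
  loopless := by
    constructor
    rintro x (⟨a, b, hx, hy, _⟩ | ⟨a, b, hx, hy, _⟩) <;> subst hx <;> simp at hy

/-- `S` is the vertex set of a monochromatic tree: it induces a connected subgraph in some
color class.  (A single vertex also counts as a monochromatic tree.) -/
def IsMonoTreeSet {α β γ : Type*} (c : α → β → γ) (S : Set (α ⊕ β)) : Prop :=
  ∃ k, ((biColorGraph c k).induce S).Connected

/-- `P` is a partition of the vertex set of the complete bipartite graph into
(nonempty, pairwise vertex-disjoint) vertex sets of monochromatic trees. -/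
def IsMonoTreePartition {α β γ : Type*} (c : α → β → γ) (P : Finset (Set (α ⊕ β))) : Prop :=
  (∀ S ∈ P, IsMonoTreeSet c S) ∧ ∀ x : α ⊕ β, ∃! S, S ∈ P ∧ x ∈ S

/-- The vertex set can be partitioned into at most `m` vertex-disjoint monochromatic trees. -/
def HasMonoTreePartition {α β γ : Type*} (c : α → β → γ) (m : ℕ) : Prop :=
  ∃ P : Finset (Set (α ⊕ β)), IsMonoTreePartition c P ∧ P.card ≤ m

/-- Every vertex has color degree 3, i.e. all three colors appear on its incident edges. -/
def ColorDegreeThree {α β : Type*} (c : α → β → Fin 3) : Prop :=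
  (∀ (a : α) (k : Fin 3), ∃ b, c a b = k) ∧ ∀ (b : β) (k : Fin 3), ∃ a, c a b = k

/-! For 2-edge-colorings we use `Bool` as the color type: `true` = blue, `false` = green. -/

/-- The vertices of `α` all of whose incident edges are blue. -/
def XA {α β : Type*} (c : α → β → Bool) : Set α := {a | ∀ b, c a b = true}

/-- The vertices of `α` all of whose incident edges are green. -/
def YA {α β : Type*} (c : α → β → Bool) : Set α := {a | ∀ b, c a b = false}

/-- The vertices of `β` all of whose incident edges are blue. -/
def XB {α β : Type*} (c : α → β → Bool) : Set β := {b | ∀ a, c a b = true}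

/-- The vertices of `β` all of whose incident edges are green. -/
def YB {α β : Type*} (c : α → β → Bool) : Set β := {b | ∀ a, c a b = false}

/-- `S`-type graph: `X(G) ≠ ∅` and `Y(G) ≠ ∅`. -/
def IsSType {α β : Type*} (c : α → β → Bool) : Prop :=
  ((XA c).Nonempty ∨ (XB c).Nonempty) ∧ ((YA c).Nonempty ∨ (YB c).Nonempty)

/-- `M`-type graph: there are partitions `A = A1 ∪ A1ᶜ`, `B = B1 ∪ B1ᶜ` with all four parts
nonempty such that `K(A1,B1)` and `K(A1ᶜ,B1ᶜ)` are blue and `K(A1,B1ᶜ)`, `K(A1ᶜ,B1)`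
are green. -/
def IsMType {α β : Type*} (c : α → β → Bool) : Prop :=
  ∃ (A1 : Set α) (B1 : Set β),
    A1.Nonempty ∧ A1ᶜ.Nonempty ∧ B1.Nonempty ∧ B1ᶜ.Nonempty ∧
    (∀ a ∈ A1, ∀ b ∈ B1, c a b = true) ∧
    (∀ a ∈ A1ᶜ, ∀ b ∈ B1ᶜ, c a b = true) ∧
    (∀ a ∈ A1, ∀ b ∈ B1ᶜ, c a b = false) ∧
    (∀ a ∈ A1ᶜ, ∀ b ∈ B1, c a b = false)

/-- For a subset `Bi ⊆ B`, the set `b(Bi) ⊆ A` of vertices sending blue edges to all of `Bi`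
and green edges to all of `Biᶜ`.  (Thus `b(B̄i) = bsetA c Biᶜ`.) -/
def bsetA {α β : Type*} (c : α → β → Bool) (Bi : Set β) : Set α :=
  {a | (∀ b ∈ Bi, c a b = true) ∧ ∀ b ∈ Biᶜ, c a b = false}

/-- For a subset `Ai ⊆ A`, the set `b(Ai) ⊆ B` of vertices sending blue edges to all of `Ai`
and green edges to all of `Aiᶜ`. -/
def bsetB {α β : Type*} (c : α → β → Bool) (Ai : Set α) : Set β :=
  {b | (∀ a ∈ Ai, c a b = true) ∧ ∀ a ∈ Aiᶜ, c a b = false}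

/-- `S1*`-type graph with `X(G) ∪ Y(G) ⊆ A`: `|B| = 1`, `|A1| ≥ 2` and `|A3| ≥ 2`
(where `A1 = X(G)`, `A3 = Y(G)`). -/
def IsS1StarA {α β : Type*} [Fintype β] (c : α → β → Bool) : Prop :=
  Fintype.card β = 1 ∧ 2 ≤ (XA c).ncard ∧ 2 ≤ (YA c).ncard

/-- `S1'`-type graph with `X(G) ∪ Y(G) ⊆ A`: `|A1| ≥ 2`, `|A3| ≥ 2`, `|B| ≥ 2`, and for
every partition `B = Bi ∪ B̄i` into nonempty parts, `b(Bi) ≠ ∅` and `b(B̄i) ≠ ∅`. -/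
def IsS1PrimeA {α β : Type*} [Fintype β] (c : α → β → Bool) : Prop :=
  2 ≤ (XA c).ncard ∧ 2 ≤ (YA c).ncard ∧ 2 ≤ Fintype.card β ∧
  ∀ Bi : Set β, Bi.Nonempty → Biᶜ.Nonempty →
    (bsetA c Bi).Nonempty ∧ (bsetA c Biᶜ).Nonempty

/-- `S1*`-type graph with `X(G) ∪ Y(G) ⊆ B`. -/
def IsS1StarB {α β : Type*} [Fintype α] (c : α → β → Bool) : Prop :=
  Fintype.card α = 1 ∧ 2 ≤ (XB c).ncard ∧ 2 ≤ (YB c).ncard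

/-- `S1'`-type graph with `X(G) ∪ Y(G) ⊆ B`. -/
def IsS1PrimeB {α β : Type*} [Fintype α] (c : α → β → Bool) : Prop :=
  2 ≤ (XB c).ncard ∧ 2 ≤ (YB c).ncard ∧ 2 ≤ Fintype.card α ∧
  ∀ Ai : Set α, Ai.Nonempty → Aiᶜ.Nonempty →
    (bsetB c Ai).Nonempty ∧ (bsetB c Aiᶜ).Nonempty

/-- `S1`-type graph: `S1*`-type or `S1'`-type. -/
def IsS1 {α β : Type*} [Fintype α] [Fintype β] (c : α → β → Bool) : Prop :=
  IsS1StarA c ∨ IsS1PrimeA c ∨ IsS1StarB c ∨ IsS1PrimeB c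

/-- `S2`-type graph: an `S`-type graph that is not `S1`-type. -/
def IsS2 {α β : Type*} [Fintype α] [Fintype β] (c : α → β → Bool) : Prop :=
  IsSType c ∧ ¬ IsS1 c

section Helpers

open SimpleGraph Sum

variable {α β : Type*} {c : α → β → Bool} {k : Bool}

@[simp] lemma bcg_adj_inl_inr {a : α} {b : β} :
    (biColorGraph c k).Adj (inl a) (inr b) ↔ c a b = k := by
  simp [biColorGraph]

@[simp] lemma bcg_adj_inr_inl {a : α} {b : β} :
    (biColorGraph c k).Adj (inr b) (inl a) ↔ c a b = k := by
  simp [biColorGraph]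

@[simp] lemma bcg_adj_inl_inl {a a' : α} :
    ¬ (biColorGraph c k).Adj (inl a) (inl a') := by
  simp [biColorGraph]

@[simp] lemma bcg_adj_inr_inr {b b' : β} :
    ¬ (biColorGraph c k).Adj (inr b) (inr b') := by
  simp [biColorGraph]

variable {V : Type*} {G : SimpleGraph V}

lemma reach_induce_of_adj {S : Set V} {u v : V} (hu : u ∈ S) (hv : v ∈ S)
    (h : G.Adj u v) : (G.induce S).Reachable ⟨u, hu⟩ ⟨v, hv⟩ := by
  exact Adj.reachable (by simpa using h)

lemma connected_induce_of_hub {S : Set V} {x : V} (hx : x ∈ S)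
    (h : ∀ v (hv : v ∈ S), (G.induce S).Reachable ⟨v, hv⟩ ⟨x, hx⟩) :
    (G.induce S).Connected := by
  have : Nonempty ↥S := ⟨⟨x, hx⟩⟩
  exact ⟨fun u v => (h u.1 u.2).trans (h v.1 v.2).symm⟩

lemma reach_induce_class {w : V} :
    ∀ {u v : V} (_ : G.Walk u v) (hu : G.Reachable w u) (hv : G.Reachable w v),
      (G.induce {z | G.Reachable w z}).Reachable ⟨u, hu⟩ ⟨v, hv⟩ := by
  intro u v p
  induction p with
  | nil => intro hu hv; exact Reachable.refl _
  | cons h p ih =>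
    intro hu hv
    have hx := hu.trans h.reachable
    exact Reachable.trans (reach_induce_of_adj (S := {z | G.Reachable w z}) hu hx h) (ih hx hv)

lemma connected_induce_reachClass {w : V} :
    (G.induce {z | G.Reachable w z}).Connected := by
  refine connected_induce_of_hub (S := {z | G.Reachable w z}) (x := w) (Reachable.refl w) ?_
  intro v hv
  have hv' := hv
  obtain ⟨p⟩ := hv'
  exact reach_induce_class p.reverse hv (Reachable.refl w)

lemma exists_adj_of_preconnected {u v : V} (h : G.Preconnected) (hne : u ≠ v) :
    ∃ w, G.Adj u w := by
  obtain ⟨p⟩ := h u v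
  cases p with
  | nil => exact absurd rfl hne
  | cons h p => exact ⟨_, h⟩

lemma isMonoTreeSet_singleton (c : α → β → Bool) (v : α ⊕ β) : IsMonoTreeSet c {v} := by
  refine ⟨true, ?_⟩
  have : Nonempty ↥({v} : Set (α ⊕ β)) := ⟨⟨v, rfl⟩⟩
  refine ⟨fun a b => ?_⟩
  have ha := a.2
  have hb := b.2
  simp only [Set.mem_singleton_iff] at ha hb
  have : a = b := Subtype.ext (ha.trans hb.symm)
  exact this ▸ Reachable.refl a

lemma build_partition {c : α → β → Bool} {K : ℕ} (P : Finset (Set (α ⊕ β)))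
    (hmono : ∀ S ∈ P, IsMonoTreeSet c S)
    (hcover : ∀ x, ∃ S ∈ P, x ∈ S)
    (hdisj : ∀ S ∈ P, ∀ S' ∈ P, S ≠ S' → Disjoint S S')
    (hcard : P.card ≤ K) : HasMonoTreePartition c K := by
  refine ⟨P, ⟨hmono, fun x => ?_⟩, hcard⟩
  obtain ⟨S, hS, hx⟩ := hcover x
  refine ⟨S, ⟨hS, hx⟩, fun S' ⟨hS', hx'⟩ => ?_⟩
  by_contra hne
  exact Set.disjoint_left.mp (hdisj S' hS' S hS hne) hx' hx

lemma bool_ne_iff' {x k : Bool} : x ≠ k ↔ x = !k := by cases x <;> cases k <;> simp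

end Helpers

section Upper

open SimpleGraph Sum

variable {m n : ℕ}

/-- One monochromatic tree suffices when some vertex is a hub and every vertex has a
`k`-edge. -/
lemma upper_one (c : Fin m → Fin n → Bool) (k : Bool)
    (hhub : (∃ x, ∀ b, c x b = k) ∨ (∃ y, ∀ a, c a y = k))
    (hedgeA : ∀ a, ∃ b, c a b = k) (hedgeB : ∀ b, ∃ a, c a b = k) :
    HasMonoTreePartition c 1 := by
  classical
  set G := biColorGraph c k with hG
  obtain ⟨x, hx⟩ | ⟨y, hy⟩ := hhub
  · set v0 : Fin m ⊕ Fin n := inl x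
    have hreach : ∀ z, G.Reachable v0 z := by
      intro z
      cases z with
      | inr b => exact (Adj.reachable (by simp [hG, v0, hx b]))
      | inl a =>
        obtain ⟨b, hb⟩ := hedgeA a
        exact (Adj.reachable (v := inr b) (by simp [hG, v0, hx b])).trans
          (Adj.reachable (by simp [hG, v0, hb]))
    refine build_partition {(({z | G.Reachable v0 z}) : Set (Fin m ⊕ Fin n))} ?_ ?_ ?_ ?_
    · intro S hS
      simp only [Finset.mem_singleton] at hS
      exact hS ▸ ⟨k, connected_induce_reachClass⟩
    · intro z; exact ⟨_, Finset.mem_singleton_self _, hreach z⟩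
    · intro S hS S' hS' hne
      simp only [Finset.mem_singleton] at hS hS'
      exact absurd (hS.trans hS'.symm) hne
    · simp
  · set v0 : Fin m ⊕ Fin n := inr y
    have hreach : ∀ z, G.Reachable v0 z := by
      intro z
      cases z with
      | inl a => exact (Adj.reachable (by simp [hG, v0, hy a]))
      | inr b =>
        obtain ⟨a, ha⟩ := hedgeB b
        exact (Adj.reachable (v := inl a) (by simp [hG, v0, hy a])).trans
          (Adj.reachable (by simp [hG, v0, ha]))
    refine build_partition {(({z | G.Reachable v0 z}) : Set (Fin m ⊕ Fin n))} ?_ ?_ ?_ ?_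
    · intro S hS
      simp only [Finset.mem_singleton] at hS
      exact hS ▸ ⟨k, connected_induce_reachClass⟩
    · intro z; exact ⟨_, Finset.mem_singleton_self _, hreach z⟩
    · intro S hS S' hS' hne
      simp only [Finset.mem_singleton] at hS hS'
      exact absurd (hS.trans hS'.symm) hne
    · simp

/-- hub star tree plus singletons for the opposite-monochromatic class. -/
lemma upper_ext (c : Fin m → Fin n → Bool) (k : Bool) (hn : 0 < n)
    (x : Fin m) (hx : ∀ b, c x b = k) (t : ℕ)
    (hcard : (Finset.univ.filter (fun a : Fin m => ∀ b, c a b = !k)).card ≤ t) :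
    HasMonoTreePartition c (1 + t) := by
  classical
  set T1 : Set (Fin m ⊕ Fin n) := {z | ∀ a, z = inl a → ∃ b, c a b = k} with hT1
  set R : Finset (Fin m) := Finset.univ.filter (fun a : Fin m => ∀ b, c a b = !k) with hR
  set P : Finset (Set (Fin m ⊕ Fin n)) :=
    insert T1 (R.image (fun a => ({inl a} : Set (Fin m ⊕ Fin n)))) with hP
  have hxT1 : (inl x : Fin m ⊕ Fin n) ∈ T1 := by
    intro a ha
    obtain rfl : x = a := by simpa using ha
    exact ⟨⟨0, hn⟩, hx _⟩
  have hinrT1 : ∀ b : Fin n, (inr b : Fin m ⊕ Fin n) ∈ T1 := by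
    intro b a ha; simp at ha
  have hmonoT1 : IsMonoTreeSet c T1 := by
    refine ⟨k, connected_induce_of_hub hxT1 ?_⟩
    intro v hv
    cases v with
    | inr b => exact reach_induce_of_adj (hinrT1 b) hxT1 (by simp [hx b])
    | inl a =>
      obtain ⟨b, hb⟩ := hv a rfl
      exact (reach_induce_of_adj hv (hinrT1 b) (by simp [hb])).trans
        (reach_induce_of_adj (hinrT1 b) hxT1 (by simp [hx b]))
  refine build_partition P ?_ ?_ ?_ ?_
  · intro S hS
    simp only [hP, Finset.mem_insert, Finset.mem_image] at hS
    obtain rfl | ⟨a, _, rfl⟩ := hS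
    · exact hmonoT1
    · exact isMonoTreeSet_singleton c _
  · intro z
    cases z with
    | inr b => exact ⟨T1, by simp [hP], hinrT1 b⟩
    | inl a =>
      by_cases h : ∃ b, c a b = k
      · refine ⟨T1, by simp [hP], ?_⟩
        intro a' ha'
        obtain rfl : a = a' := by simpa using ha'
        exact h
      · push_neg at h
        refine ⟨{inl a}, ?_, rfl⟩
        simp only [hP, Finset.mem_insert, Finset.mem_image]
        exact Or.inr ⟨a, by simp [hR, fun b => bool_ne_iff'.mp (h b)], rfl⟩
  · intro S hS S' hS' hne
    simp only [hP, Finset.mem_insert, Finset.mem_image] at hS hS'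
    have key : ∀ a ∈ R, Disjoint T1 ({inl a} : Set (Fin m ⊕ Fin n)) := by
      intro a ha
      rw [Set.disjoint_right]
      intro z hz
      simp only [Set.mem_singleton_iff] at hz
      subst hz
      intro hmem
      obtain ⟨b, hb⟩ := hmem a rfl
      simp only [hR, Finset.mem_filter] at ha
      rw [ha.2 b] at hb
      simp at hb
    obtain rfl | ⟨a, ha, rfl⟩ := hS <;> obtain rfl | ⟨a', ha', rfl⟩ := hS'
    · exact absurd rfl hne
    · exact key a' ha'
    · exact (key a ha).symm
    · rw [Set.disjoint_left]
      intro z hz hz'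
      simp only [Set.mem_singleton_iff] at hz hz'
      exact hne (by rw [hz] at hz'; rw [hz'])
  · calc P.card ≤ (R.image (fun a => ({inl a} : Set (Fin m ⊕ Fin n)))).card + 1 :=
          Finset.card_insert_le _ _
    _ ≤ R.card + 1 := by gcongr; exact Finset.card_image_le
    _ ≤ 1 + t := by omega

/-- Two hub trees plus singletons for one middle colour class. -/
lemma upper_mid (c : Fin m → Fin n → Bool)
    (x y : Fin m) (hx : ∀ b, c x b = true) (hy : ∀ b, c y b = false)
    (p : Fin n → Bool) (b1 b0 : Fin n) (hb1 : p b1 = true) (hb0 : p b0 = false) (t : ℕ)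
    (hcard : (Finset.univ.filter (fun a : Fin m => ∀ b, c a b = p b)).card ≤ t) :
    HasMonoTreePartition c (2 + t) := by
  classical
  set T1 : Set (Fin m ⊕ Fin n) :=
    {z | (∃ b, z = inr b ∧ p b = false) ∨ (∃ a, z = inl a ∧ ∃ b, p b = false ∧ c a b = true)}
    with hT1
  set T2 : Set (Fin m ⊕ Fin n) :=
    {z | (∃ b, z = inr b ∧ p b = true) ∨
      (∃ a, z = inl a ∧ (∀ b, p b = false → c a b = false) ∧ ∃ b, p b = true ∧ c a b = false)}
    with hT2
  set R : Finset (Fin m) := Finset.univ.filter (fun a : Fin m => ∀ b, c a b = p b) with hR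
  set P : Finset (Set (Fin m ⊕ Fin n)) :=
    insert T1 (insert T2 (R.image (fun a => ({inl a} : Set (Fin m ⊕ Fin n))))) with hP
  have hxT1 : (inl x : Fin m ⊕ Fin n) ∈ T1 := Or.inr ⟨x, rfl, b0, hb0, hx b0⟩
  have hyT2 : (inl y : Fin m ⊕ Fin n) ∈ T2 :=
    Or.inr ⟨y, rfl, fun b _ => hy b, b1, hb1, hy b1⟩
  have hinrT1 : ∀ b : Fin n, p b = false → (inr b : Fin m ⊕ Fin n) ∈ T1 :=
    fun b hb => Or.inl ⟨b, rfl, hb⟩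
  have hinrT2 : ∀ b : Fin n, p b = true → (inr b : Fin m ⊕ Fin n) ∈ T2 :=
    fun b hb => Or.inl ⟨b, rfl, hb⟩
  have hmonoT1 : IsMonoTreeSet c T1 := by
    refine ⟨true, connected_induce_of_hub hxT1 ?_⟩
    intro v hv
    obtain ⟨b, rfl, hb⟩ | ⟨a, rfl, b, hb, hab⟩ := id hv
    · exact reach_induce_of_adj (S := T1) hv hxT1 (by simp [hx b])
    · exact (reach_induce_of_adj (S := T1) hv (hinrT1 b hb)
        (by simp [hab])).trans
        (reach_induce_of_adj (S := T1) (hinrT1 b hb) hxT1 (by simp [hx b]))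
  have hmonoT2 : IsMonoTreeSet c T2 := by
    refine ⟨false, connected_induce_of_hub hyT2 ?_⟩
    intro v hv
    obtain ⟨b, rfl, hb⟩ | ⟨a, rfl, hall, b, hb, hab⟩ := id hv
    · exact reach_induce_of_adj (S := T2) hv hyT2 (by simp [hy b])
    · exact (reach_induce_of_adj (S := T2) hv (hinrT2 b hb)
        (by simp [hab])).trans
        (reach_induce_of_adj (S := T2) (hinrT2 b hb) hyT2 (by simp [hy b]))
  refine build_partition P ?_ ?_ ?_ ?_
  · intro S hS
    simp only [hP, Finset.mem_insert, Finset.mem_image] at hS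
    obtain rfl | rfl | ⟨a, _, rfl⟩ := hS
    · exact hmonoT1
    · exact hmonoT2
    · exact isMonoTreeSet_singleton c _
  · intro z
    cases z with
    | inr b =>
      rcases Bool.eq_false_or_eq_true (p b) with hb | hb
      · exact ⟨T2, by simp [hP], hinrT2 b hb⟩
      · exact ⟨T1, by simp [hP], hinrT1 b hb⟩
    | inl a =>
      by_cases h1 : ∃ b, p b = false ∧ c a b = true
      · obtain ⟨b, hb, hab⟩ := h1
        exact ⟨T1, by simp [hP], Or.inr ⟨a, rfl, b, hb, hab⟩⟩
      · push_neg at h1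
        have h1' : ∀ b, p b = false → c a b = false := by
          intro b hb
          have := h1 b hb
          exact bool_ne_iff'.mp this
        by_cases h2 : ∃ b, p b = true ∧ c a b = false
        · obtain ⟨b, hb, hab⟩ := h2
          exact ⟨T2, by simp [hP], Or.inr ⟨a, rfl, h1', b, hb, hab⟩⟩
        · push_neg at h2
          have h2' : ∀ b, p b = true → c a b = true := by
            intro b hb
            have := h2 b hb
            simpa using bool_ne_iff'.mp this
          have haR : a ∈ R := by
            simp only [hR, Finset.mem_filter, Finset.mem_univ, true_and]
            intro b
            rcases Bool.eq_false_or_eq_true (p b) with hb | hb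
            · rw [hb]; exact h2' b hb
            · rw [hb]; exact h1' b hb
          refine ⟨{inl a}, ?_, rfl⟩
          simp only [hP, Finset.mem_insert, Finset.mem_image]
          exact Or.inr (Or.inr ⟨a, haR, rfl⟩)
  · intro S hS S' hS' hne
    have hd12 : Disjoint T1 T2 := by
      rw [Set.disjoint_left]
      rintro z (⟨b, rfl, hb⟩ | ⟨a, rfl, b, hb, hab⟩)
      · rintro (⟨b', hb', hpb⟩ | ⟨a', ha', _⟩)
        · obtain rfl : b = b' := by simpa using hb'
          simp [hb] at hpb
        · simp at ha'
      · rintro (⟨b', hb', _⟩ | ⟨a', ha', hall, _⟩)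
        · simp at hb'
        · obtain rfl : a = a' := by simpa using ha'
          rw [hall b hb] at hab
          simp at hab
    have hd1s : ∀ a ∈ R, Disjoint T1 ({inl a} : Set (Fin m ⊕ Fin n)) := by
      intro a ha
      rw [Set.disjoint_right]
      rintro z hz
      simp only [Set.mem_singleton_iff] at hz
      subst hz
      rintro (⟨b, hb, _⟩ | ⟨a', ha', b, hb, hab⟩)
      · simp at hb
      · obtain rfl : a = a' := by simpa using ha'
        simp only [hR, Finset.mem_filter] at ha
        rw [ha.2 b, hb] at hab
        simp at hab
    have hd2s : ∀ a ∈ R, Disjoint T2 ({inl a} : Set (Fin m ⊕ Fin n)) := by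
      intro a ha
      rw [Set.disjoint_right]
      rintro z hz
      simp only [Set.mem_singleton_iff] at hz
      subst hz
      rintro (⟨b, hb, _⟩ | ⟨a', ha', _, b, hb, hab⟩)
      · simp at hb
      · obtain rfl : a = a' := by simpa using ha'
        simp only [hR, Finset.mem_filter] at ha
        rw [ha.2 b, hb] at hab
        simp at hab
    have hss : ∀ (a a' : Fin m), ({inl a} : Set (Fin m ⊕ Fin n)) ≠ {inl a'} →
        Disjoint ({inl a} : Set (Fin m ⊕ Fin n)) ({inl a'} : Set (Fin m ⊕ Fin n)) := by
      intro a a' hne'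
      rw [Set.disjoint_left]
      intro z hz hz'
      simp only [Set.mem_singleton_iff] at hz hz'
      exact hne' (by rw [hz] at hz'; rw [hz'])
    simp only [hP, Finset.mem_insert, Finset.mem_image] at hS hS'
    obtain rfl | rfl | ⟨a, ha, rfl⟩ := hS <;> obtain rfl | rfl | ⟨a', ha', rfl⟩ := hS'
    · exact absurd rfl hne
    · exact hd12
    · exact hd1s a' ha'
    · exact hd12.symm
    · exact absurd rfl hne
    · exact hd2s a' ha'
    · exact (hd1s a ha).symm
    · exact (hd2s a ha).symm
    · exact hss a a' hne
  · calc P.card ≤ (insert T2 (R.image (fun a => ({inl a} : Set (Fin m ⊕ Fin n))))).card + 1 :=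
          Finset.card_insert_le _ _
    _ ≤ (R.image (fun a => ({inl a} : Set (Fin m ⊕ Fin n)))).card + 1 + 1 := by
          gcongr
          exact Finset.card_insert_le _ _
    _ ≤ R.card + 2 := by
          have := Finset.card_image_le (s := R)
            (f := fun a => ({inl a} : Set (Fin m ⊕ Fin n)))
          omega
    _ ≤ 2 + t := by omega

/-- S-type on the B side: two trees suffice. -/
lemma upper_4b (c : Fin m → Fin n → Bool) (hm2 : 2 ≤ m) (hnm : n ≤ m)
    (xb : Fin n) (hxb : ∀ a, c a xb = true) :
    HasMonoTreePartition c 2 := by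
  classical
  have ha : ∃ a0 : Fin m, ∀ b, ¬(c a0 b = true ∧ ∀ a', a' ≠ a0 → c a' b = false) := by
    by_contra hcon
    push_neg at hcon
    choose f hf1 hf2 using hcon
    have hinj : Function.Injective f := by
      intro a1 a2 heq
      by_contra hne
      have h := hf2 a2 a1 hne
      rw [← heq, hf1 a1] at h
      simp at h
    have hmn : m ≤ n := by simpa using Fintype.card_le_of_injective f hinj
    have hmeq : m = n := le_antisymm hmn hnm
    have hbij : Function.Bijective f :=
      (Fintype.bijective_iff_injective_and_card f).mpr ⟨hinj, by simp [hmeq]⟩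
    obtain ⟨a, hfa⟩ := hbij.2 xb
    obtain ⟨a'', ha''⟩ := Fintype.exists_ne_of_one_lt_card (by rw [Fintype.card_fin]; omega) a
    have h := hf2 a a'' ha''
    rw [hfa, hxb a''] at h
    simp at h
  obtain ⟨a0, ha0⟩ := ha
  set T2 : Set (Fin m ⊕ Fin n) :=
    {z | z = inl a0 ∨ ∃ b, z = inr b ∧ ∀ a, c a b = false} with hT2
  set T1 : Set (Fin m ⊕ Fin n) :=
    {z | (∃ a, z = inl a ∧ a ≠ a0) ∨ ∃ b, z = inr b ∧ ¬(∀ a, c a b = false)} with hT1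
  have hxbT1 : (inr xb : Fin m ⊕ Fin n) ∈ T1 := by
    refine Or.inr ⟨xb, rfl, fun h => ?_⟩
    have h1 := h a0
    rw [hxb a0] at h1
    simp at h1
  have ha0T2 : (inl a0 : Fin m ⊕ Fin n) ∈ T2 := Or.inl rfl
  have hmonoT2 : IsMonoTreeSet c T2 := by
    refine ⟨false, connected_induce_of_hub ha0T2 ?_⟩
    intro v hv
    obtain rfl | ⟨b, rfl, hb⟩ := id hv
    · exact Reachable.refl _
    · exact reach_induce_of_adj (S := T2) hv ha0T2 (by simp [hb a0])
  have hmonoT1 : IsMonoTreeSet c T1 := by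
    refine ⟨true, connected_induce_of_hub hxbT1 ?_⟩
    intro v hv
    obtain ⟨a, rfl, hane⟩ | ⟨b, rfl, hb⟩ := id hv
    · exact reach_induce_of_adj (S := T1) hv hxbT1 (by simp [hxb a])
    · -- b has a blue neighbour different from a0
      have hblue : ∃ a', a' ≠ a0 ∧ c a' b = true := by
        by_contra hno
        push_neg at hno
        have hno' : ∀ a', a' ≠ a0 → c a' b = false := by
          intro a' h'
          exact bool_ne_iff'.mp (hno a' h')
        rcases Bool.eq_false_or_eq_true (c a0 b) with h0 | h0
        · exact ha0 b ⟨h0, hno'⟩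
        · apply hb
          intro a
          by_cases haa : a = a0
          · rw [haa]; exact h0
          · exact hno' a haa
      obtain ⟨a', ha'ne, ha'⟩ := hblue
      have ha'T1 : (inl a' : Fin m ⊕ Fin n) ∈ T1 := Or.inl ⟨a', rfl, ha'ne⟩
      exact (reach_induce_of_adj (S := T1) hv ha'T1 (by simp [ha'])).trans
        (reach_induce_of_adj (S := T1) ha'T1 hxbT1 (by simp [hxb a']))
  refine build_partition {T1, T2} ?_ ?_ ?_ ?_
  · intro S hS
    simp only [Finset.mem_insert, Finset.mem_singleton] at hS
    obtain rfl | rfl := hS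
    · exact hmonoT1
    · exact hmonoT2
  · intro z
    cases z with
    | inl a =>
      by_cases haa : a = a0
      · exact ⟨T2, by simp, Or.inl (by rw [haa])⟩
      · exact ⟨T1, by simp, Or.inl ⟨a, rfl, haa⟩⟩
    | inr b =>
      by_cases hball : ∀ a, c a b = false
      · exact ⟨T2, by simp, Or.inr ⟨b, rfl, hball⟩⟩
      · exact ⟨T1, by simp, Or.inr ⟨b, rfl, hball⟩⟩
  · intro S hS S' hS' hne
    have hd : Disjoint T1 T2 := by
      rw [Set.disjoint_left]
      rintro z (⟨a, rfl, hane⟩ | ⟨b, rfl, hb⟩)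
      · rintro (h | ⟨b', hb', _⟩)
        · exact hane (by simpa using h)
        · simp at hb'
      · rintro (h | ⟨b', hb', hall⟩)
        · simp at h
        · obtain rfl : b = b' := by simpa using hb'
          exact hb hall
    simp only [Finset.mem_insert, Finset.mem_singleton] at hS hS'
    obtain rfl | rfl := hS <;> obtain rfl | rfl := hS' <;>
      first
        | exact absurd rfl hne
        | exact hd
        | exact hd.symm
  · exact Finset.card_insert_le _ _ |>.trans (by simp)

section ThreeComp

variable (c : Fin m → Fin n → Bool)

/-- If the green graph has three pairwise unreachable vertices and every vertex has a green
edge, then the blue graph is preconnected. -/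
lemma blue_preconnected_of_three
    (hgA : ∀ a, ∃ b, c a b = false) (hgB : ∀ b, ∃ a, c a b = false)
    (u v w : Fin m ⊕ Fin n)
    (huv : ¬(biColorGraph c false).Reachable u v)
    (huw : ¬(biColorGraph c false).Reachable u w)
    (hvw : ¬(biColorGraph c false).Reachable v w) :
    (biColorGraph c true).Preconnected := by
  classical
  set Gf := biColorGraph c false with hGf
  set Gt := biColorGraph c true with hGt
  choose gB hgB' using hgA
  choose gA hgA' using hgB
  -- representatives on each side of the green component of z
  let repA : Fin m ⊕ Fin n → Fin m := fun z => Sum.elim id gA z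
  let repB : Fin m ⊕ Fin n → Fin n := fun z => Sum.elim gB id z
  have hrepA : ∀ z, Gf.Reachable z (inl (repA z)) := by
    rintro (a | b)
    · exact Reachable.refl _
    · exact Adj.reachable (by simp [hGf, repA, hgA' b])
  have hrepB : ∀ z, Gf.Reachable z (inr (repB z)) := by
    rintro (a | b)
    · exact Adj.reachable (by simp [hGf, repB, hgB' a])
    · exact Reachable.refl _
  -- blue edges towards unreachable components
  have hblueA : ∀ (z : Fin m ⊕ Fin n) (a : Fin m), ¬Gf.Reachable z (inl a) →
      Gt.Adj (inl a) (inr (repB z)) := by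
    intro z a hza
    rcases Bool.eq_false_or_eq_true (c a (repB z)) with h | h
    · simp [hGt, h]
    · exact absurd ((hrepB z).trans (Adj.reachable (by simp [hGf, h])).symm) hza
  have hblueB : ∀ (z : Fin m ⊕ Fin n) (b : Fin n), ¬Gf.Reachable z (inr b) →
      Gt.Adj (inr b) (inl (repA z)) := by
    intro z b hzb
    rcases Bool.eq_false_or_eq_true (c (repA z) b) with h | h
    · simp [hGt, h]
    · exact absurd ((hrepA z).trans (Adj.reachable (by simp [hGf, h])).symm) hzb
  -- selection of suitable components
  have sel1 : ∀ p q : Fin m ⊕ Fin n, ∃ z, z ∈ ({u, v, w} : Set _) ∧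
      ¬Gf.Reachable z p ∧ ¬Gf.Reachable z q := by
    intro p q
    have pair : ∀ z1 z2 x, ¬Gf.Reachable z1 z2 →
        Gf.Reachable z1 x → Gf.Reachable z2 x → False :=
      fun z1 z2 x h12 h1 h2 => h12 (h1.trans h2.symm)
    by_cases h1 : Gf.Reachable u p
    · have hv' : ¬Gf.Reachable v p := fun h => pair u v p huv h1 h
      have hw' : ¬Gf.Reachable w p := fun h => pair u w p huw h1 h
      by_cases h2 : Gf.Reachable v q
      · exact ⟨w, by simp, hw', fun h => pair v w q hvw h2 h⟩
      · exact ⟨v, by simp, hv', h2⟩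
    · by_cases h2 : Gf.Reachable u q
      · have hv' : ¬Gf.Reachable v q := fun h => pair u v q huv h2 h
        have hw' : ¬Gf.Reachable w q := fun h => pair u w q huw h2 h
        by_cases h3 : Gf.Reachable v p
        · exact ⟨w, by simp, fun h => pair v w p hvw h3 h, hw'⟩
        · exact ⟨v, by simp, h3, hv'⟩
      · exact ⟨u, by simp, h1, h2⟩
  have sel2 : ∀ p q : Fin m ⊕ Fin n, ∃ z z', ¬Gf.Reachable z z' ∧
      ¬Gf.Reachable z p ∧ ¬Gf.Reachable z' q := by
    intro p q
    have pair : ∀ z1 z2 x, ¬Gf.Reachable z1 z2 →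
        Gf.Reachable z1 x → Gf.Reachable z2 x → False :=
      fun z1 z2 x h12 h1 h2 => h12 (h1.trans h2.symm)
    by_cases h1 : Gf.Reachable u p
    · have hv' : ¬Gf.Reachable v p := fun h => pair u v p huv h1 h
      have hw' : ¬Gf.Reachable w p := fun h => pair u w p huw h1 h
      by_cases h2 : Gf.Reachable v q
      · exact ⟨v, w, hvw, hv', fun h => pair v w q hvw h2 h⟩
      · exact ⟨w, v, fun h => hvw h.symm, hw', h2⟩
    · by_cases h2 : Gf.Reachable v q
      · have hw' : ¬Gf.Reachable w q := fun h => pair v w q hvw h2 h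
        exact ⟨u, w, huw, h1, hw'⟩
      · exact ⟨u, v, huv, h1, h2⟩
  -- main connectivity
  have mixed : ∀ (a : Fin m) (b : Fin n), Gt.Reachable (inl a) (inr b) := by
    intro a b
    obtain ⟨z, z', hzz', hzp, hz'q⟩ := sel2 (inl a) (inr b)
    have h1 : Gt.Adj (inl a) (inr (repB z)) := hblueA z a hzp
    have h2 : Gt.Adj (inr (repB z)) (inl (repA z')) := by
      refine hblueB z' (repB z) fun h => hzz' ?_
      exact (hrepB z).trans h.symm
    have h3 : Gt.Adj (inl (repA z')) (inr b) := (hblueB z' b hz'q).symm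
    exact (h1.reachable.trans h2.reachable).trans h3.reachable
  intro p q
  cases p with
  | inl a =>
    cases q with
    | inl a' =>
      obtain ⟨z, _, hzp, hzq⟩ := sel1 (inl a) (inl a')
      exact (hblueA z a hzp).reachable.trans ((hblueA z a' hzq).reachable.symm)
    | inr b => exact mixed a b
  | inr b =>
    cases q with
    | inl a => exact (mixed a b).symm
    | inr b' =>
      obtain ⟨z, _, hzp, hzq⟩ := sel1 (inr b) (inr b')
      exact (hblueB z b hzp).reachable.trans ((hblueB z b' hzq).reachable.symm)

/-- No monochromatic vertex at all: two trees suffice. -/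
lemma upper_two_of_noXY (hm : 0 < m)
    (hbA : ∀ a, ∃ b, c a b = true) (hbB : ∀ b, ∃ a, c a b = true)
    (hgA : ∀ a, ∃ b, c a b = false) (hgB : ∀ b, ∃ a, c a b = false) :
    HasMonoTreePartition c 2 := by
  classical
  set Gf := biColorGraph c false with hGf
  by_cases htriple : ∃ u v w : Fin m ⊕ Fin n, ¬Gf.Reachable u v ∧ ¬Gf.Reachable u w ∧
      ¬Gf.Reachable v w
  · obtain ⟨u, v, w, h1, h2, h3⟩ := htriple
    have hpre := blue_preconnected_of_three c hgA hgB u v w h1 h2 h3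
    set v0 : Fin m ⊕ Fin n := inl ⟨0, hm⟩
    refine build_partition {({z | (biColorGraph c true).Reachable v0 z} : Set _)} ?_ ?_ ?_ ?_
    · intro S hS
      simp only [Finset.mem_singleton] at hS
      exact hS ▸ ⟨true, connected_induce_reachClass⟩
    · intro z; exact ⟨_, Finset.mem_singleton_self _, hpre v0 z⟩
    · intro S hS S' hS' hne
      simp only [Finset.mem_singleton] at hS hS'
      exact absurd (hS.trans hS'.symm) hne
    · simp
  · set v0 : Fin m ⊕ Fin n := inl ⟨0, hm⟩
    set C1 : Set (Fin m ⊕ Fin n) := {z | Gf.Reachable v0 z} with hC1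
    by_cases hc1 : ∀ z, Gf.Reachable v0 z
    · refine build_partition {C1} ?_ ?_ ?_ ?_
      · intro S hS
        simp only [Finset.mem_singleton] at hS
        exact hS ▸ ⟨false, connected_induce_reachClass⟩
      · intro z; exact ⟨C1, Finset.mem_singleton_self _, hc1 z⟩
      · intro S hS S' hS' hne
        simp only [Finset.mem_singleton] at hS hS'
        exact absurd (hS.trans hS'.symm) hne
      · simp
    · push_neg at hc1
      obtain ⟨z1, hz1⟩ := hc1
      set C2 : Set (Fin m ⊕ Fin n) := {z | Gf.Reachable z1 z} with hC2
      by_cases hc2 : ∀ z, Gf.Reachable v0 z ∨ Gf.Reachable z1 z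
      · refine build_partition {C1, C2} ?_ ?_ ?_ ?_
        · intro S hS
          simp only [Finset.mem_insert, Finset.mem_singleton] at hS
          obtain rfl | rfl := hS
          · exact ⟨false, connected_induce_reachClass⟩
          · exact ⟨false, connected_induce_reachClass⟩
        · intro z
          obtain h | h := hc2 z
          · exact ⟨C1, by simp, h⟩
          · exact ⟨C2, by simp, h⟩
        · intro S hS S' hS' hne
          have hd : Disjoint C1 C2 := by
            rw [Set.disjoint_left]
            intro z h1 h2
            exact hz1 (h1.trans h2.symm)
          simp only [Finset.mem_insert, Finset.mem_singleton] at hS hS'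
          obtain rfl | rfl := hS <;> obtain rfl | rfl := hS' <;>
            first
              | exact absurd rfl hne
              | exact hd
              | exact hd.symm
        · exact Finset.card_insert_le _ _ |>.trans (by simp)
      · push_neg at hc2
        obtain ⟨z2, hz2a, hz2b⟩ := hc2
        exact absurd ⟨v0, z1, z2, hz1, hz2a, hz2b⟩ htriple

end ThreeComp

/-- Pigeonhole over the 2^n colour classes. -/
lemma pigeonhole_classes (c : Fin m → Fin n → Bool) (hn : 1 ≤ n) (hm : 2 ≤ m) :
    (∃ p : Fin n → Bool, (∃ b, p b = true) ∧ (∃ b, p b = false) ∧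
      (Finset.univ.filter (fun a : Fin m => ∀ b, c a b = p b)).card ≤ (m - 2) / 2 ^ n)
    ∨ (Finset.univ.filter (fun a : Fin m => ∀ b, c a b = false)).card ≤ (m - 2) / 2 ^ n + 1
    ∨ (Finset.univ.filter (fun a : Fin m => ∀ b, c a b = true)).card ≤ (m - 2) / 2 ^ n + 1 := by
  classical
  set q := (m - 2) / 2 ^ n with hq
  by_contra hcon
  push_neg at hcon
  obtain ⟨h1, h2, h3⟩ := hcon
  set F : (Fin n → Bool) → Finset (Fin m) :=
    fun p => Finset.univ.filter (fun a : Fin m => ∀ b, c a b = p b) with hF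
  have hsum : ∑ p : Fin n → Bool, (F p).card = m := by
    have := Finset.card_eq_sum_card_fiberwise
      (f := fun a : Fin m => fun b => c a b) (s := Finset.univ) (t := Finset.univ)
      (fun a _ => Finset.mem_univ _)
    simp only [Finset.card_univ, Fintype.card_fin] at this
    refine Eq.trans (Finset.sum_congr rfl fun p _ => ?_) this.symm
    congr 1
    refine Finset.filter_congr fun a _ => ?_
    simp [funext_iff]
  have hcT : (fun _ : Fin n => true) ≠ (fun _ : Fin n => false) := by
    intro h
    have := congrFun h ⟨0, hn⟩
    simp at this
  have hpairsub : ({(fun _ : Fin n => false), (fun _ : Fin n => true)} : Finset (Fin n → Bool))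
      ⊆ Finset.univ := Finset.subset_univ _
  set S : Finset (Fin n → Bool) :=
    Finset.univ \ {(fun _ : Fin n => false), (fun _ : Fin n => true)} with hS
  have hsplit : ∑ p ∈ S, (F p).card +
      ∑ p ∈ ({(fun _ : Fin n => false), (fun _ : Fin n => true)} : Finset (Fin n → Bool)),
        (F p).card = ∑ p : Fin n → Bool, (F p).card :=
    Finset.sum_sdiff hpairsub
  have hpair : ∑ p ∈ ({(fun _ : Fin n => false), (fun _ : Fin n => true)} :
      Finset (Fin n → Bool)), (F p).card = (F (fun _ => false)).card + (F (fun _ => true)).card :=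
    Finset.sum_pair (by exact fun h => hcT h.symm)
  have hmid : ∀ p ∈ S, q + 1 ≤ (F p).card := by
    intro p hp
    simp only [hS, Finset.mem_sdiff, Finset.mem_insert, Finset.mem_singleton] at hp
    obtain ⟨-, hp⟩ := hp
    push_neg at hp
    obtain ⟨hpf, hpt⟩ := hp
    have hex1 : ∃ b, p b = true := by
      by_contra hno
      push_neg at hno
      exact hpf (funext fun b => by simpa using bool_ne_iff'.mp (hno b))
    have hex0 : ∃ b, p b = false := by
      by_contra hno
      push_neg at hno
      exact hpt (funext fun b => by simpa using bool_ne_iff'.mp (hno b))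
    exact h1 p hex1 hex0
  have hSsum : S.card * (q + 1) ≤ ∑ p ∈ S, (F p).card := by
    calc S.card * (q + 1) = ∑ _p ∈ S, (q + 1) := by rw [Finset.sum_const, smul_eq_mul]
    _ ≤ ∑ p ∈ S, (F p).card := Finset.sum_le_sum hmid
  have hScard : S.card = 2 ^ n - 2 := by
    rw [hS, Finset.card_sdiff_of_subset hpairsub]
    have : ({(fun _ : Fin n => false), (fun _ : Fin n => true)} :
        Finset (Fin n → Bool)).card = 2 := Finset.card_pair (fun h => hcT h.symm)
    rw [this]
    congr 1
    simp [Finset.card_univ]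
  have hN : 2 ≤ 2 ^ n := by
    calc (2:ℕ) = 2 ^ 1 := rfl
    _ ≤ 2 ^ n := Nat.pow_le_pow_right (by norm_num) hn
  rw [hScard] at hSsum
  have hsub : (2 ^ n - 2) * (q + 1) = 2 ^ n * (q + 1) - 2 * (q + 1) := Nat.sub_mul _ _ _
  have hle2 : 2 * (q + 1) ≤ 2 ^ n * (q + 1) := Nat.mul_le_mul_right _ hN
  have hmulsucc : 2 ^ n * (q + 1) = 2 ^ n * q + 2 ^ n := Nat.mul_succ _ _
  have hdm := Nat.div_add_mod (m - 2) (2 ^ n)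
  rw [← hq] at hdm
  have hmod := Nat.mod_lt (m - 2) (show 0 < 2 ^ n by omega)
  have e2 : (F (fun _ => false)).card =
      (Finset.univ.filter (fun a : Fin m => ∀ b, c a b = false)).card := rfl
  have e3 : (F (fun _ => true)).card =
      (Finset.univ.filter (fun a : Fin m => ∀ b, c a b = true)).card := rfl
  omega

end Upper

section PatVal

def patVal : (ℕ → Bool) → ℕ → ℕ
  | _, 0 => 0
  | f, (k+1) => (cond (f 0) 1 0) + 2 * patVal (fun i => f (i+1)) k

lemma patVal_lt (f : ℕ → Bool) (k : ℕ) : patVal f k < 2^k := by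
  induction k generalizing f with
  | zero => simp [patVal]
  | succ k ih =>
    have := ih (fun i => f (i+1))
    simp only [patVal, pow_succ]
    cases f 0 <;> simp <;> omega

lemma testBit_patVal (f : ℕ → Bool) (k : ℕ) {i : ℕ} (hi : i < k) :
    (patVal f k).testBit i = f i := by
  induction k generalizing f i with
  | zero => omega
  | succ k ih =>
    cases i with
    | zero =>
      rw [Nat.testBit_zero]
      simp only [patVal]
      obtain hf | hf := Bool.eq_false_or_eq_true (f 0) <;>
        simp [hf, Nat.add_mul_mod_self_left]
    | succ i =>
      rw [Nat.testBit_add_one]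
      have h2 : ((cond (f 0) 1 0) + 2 * patVal (fun i => f (i+1)) k) / 2
          = patVal (fun i => f (i+1)) k := by cases f 0 <;> simp <;> omega
      simp only [patVal, h2]
      exact ih _ (by omega)

lemma patVal_false (k : ℕ) : patVal (fun _ => false) k = 0 := by
  induction k with
  | zero => rfl
  | succ k ih =>
    simp [patVal, ih]

lemma patVal_true (k : ℕ) : patVal (fun _ => true) k = 2^k - 1 := by
  induction k with
  | zero => rfl
  | succ k ih =>
    simp only [patVal, ih, pow_succ]
    have : 1 ≤ 2^k := Nat.one_le_two_pow
    simp only [cond_true]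
    omega

lemma patVal_congr {f g : ℕ → Bool} (k : ℕ) (h : ∀ i < k, f i = g i) :
    patVal f k = patVal g k := by
  induction k generalizing f g with
  | zero => rfl
  | succ k ih =>
    simp only [patVal, h 0 (by omega), ih (fun i hi => h (i+1) (by omega))]

end PatVal

section Arith

lemma K_eq_of_two_le {m n : ℕ} (hm : 2 ≤ m) :
    ((((m : ℤ) - 2).fdiv (2 ^ n) + 2).toNat) = (m - 2) / 2 ^ n + 2 := by
  have h1 : ((m : ℤ) - 2) = ((m - 2 : ℕ) : ℤ) := by omega
  have h2 : ((2:ℤ)^n) = ((2^n : ℕ) : ℤ) := by push_cast; ring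
  have h3 : ((m : ℤ) - 2).fdiv (2^n) = (((m - 2) / 2^n : ℕ) : ℤ) := by
    rw [h1, h2]
    exact_mod_cast (Int.ofNat_fdiv (m-2) (2^n)).symm
  rw [h3]
  generalize (m - 2) / 2 ^ n = q
  omega

lemma K_eq_of_one (n : ℕ) (hn : 1 ≤ n) (hnm : n ≤ 1) :
    ((((1 : ℤ) - 2).fdiv (2 ^ n) + 2).toNat) = 1 := by
  have : n = 1 := le_antisymm hnm hn
  subst this
  decide

end Arith

section Extremal

open Sum

variable {m n : ℕ}

/-- value assignment for the extremal colouring -/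
def exHN (m n t : ℕ) : ℕ :=
  if t ≤ (m - 2) / 2 ^ n then 0
  else if ((m - 2) / 2 ^ n) * (2 ^ n - 1) < t then 2 ^ n - 1
  else (t - 1) / ((m - 2) / 2 ^ n)

def exH (m n : ℕ) (i : Fin m) : ℕ := exHN m n i.val

/-- the extremal colouring -/
def exC (m n : ℕ) (a : Fin m) (b : Fin n) : Bool := (exH m n a).testBit b.val

lemma exH_lt (hm : 2 ≤ m) (hn : 1 ≤ n) : ∀ i, exH m n i < 2 ^ n := by
  intro i
  have hN : 2 ≤ 2 ^ n := by
    calc (2:ℕ) = 2 ^ 1 := rfl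
    _ ≤ 2 ^ n := Nat.pow_le_pow_right (by norm_num) hn
  show exHN m n i.val < 2 ^ n
  unfold exHN
  set q := (m - 2) / 2 ^ n with hq
  split
  · omega
  · split
    · omega
    · rename_i h1 h2
      push_neg at h1 h2
      rcases Nat.eq_zero_or_pos q with h0 | hqpos
      · rw [h0, Nat.zero_mul] at h2
        omega
      have : (i.val - 1) / q ≤ (q * (2 ^ n - 1) - 1) / q := Nat.div_le_div_right (by omega)
      have h3 : (q * (2 ^ n - 1) - 1) / q < 2 ^ n - 1 := by
        rw [Nat.div_lt_iff_lt_mul hqpos]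
        have : 1 ≤ q * (2 ^ n - 1) := by
          have := Nat.mul_le_mul hqpos (show 1 ≤ 2 ^ n - 1 by omega)
          omega
        calc q * (2 ^ n - 1) - 1 < q * (2 ^ n - 1) := by omega
        _ = (2 ^ n - 1) * q := Nat.mul_comm _ _
      omega

/-- generic fiber bound via an interval of indices -/
lemma exH_fiber_ge (hm : 1 ≤ m) (v lo cnt : ℕ)
    (hrange : lo + cnt ≤ m)
    (hval : ∀ t, lo ≤ t → t < lo + cnt → exH m n ⟨t % m, Nat.mod_lt t (by omega)⟩ = v) :
    cnt ≤ (Finset.univ.filter (fun a : Fin m => exH m n a = v)).card := by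
  classical
  have := Finset.card_le_card_of_injOn
    (f := fun t : ℕ => (⟨t % m, Nat.mod_lt t (by omega)⟩ : Fin m))
    (s := Finset.Ico lo (lo + cnt))
    (t := Finset.univ.filter (fun a : Fin m => exH m n a = v))
    ?_ ?_
  · simpa using this
  · intro t ht
    simp only [Finset.mem_coe, Finset.mem_Ico] at ht
    simp only [Finset.mem_coe, Finset.mem_filter, Finset.mem_univ, true_and]
    exact hval t ht.1 ht.2
  · intro t1 h1 t2 h2 heq
    simp only [Finset.mem_coe, Finset.mem_Ico] at h1 h2
    have e := congrArg Fin.val heq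
    simp only at e
    rw [Nat.mod_eq_of_lt (by omega), Nat.mod_eq_of_lt (by omega)] at e
    exact e

lemma exH_facts (hm : 2 ≤ m) (hn : 1 ≤ n) :
    2 ^ n * ((m - 2) / 2 ^ n) ≤ m - 2 ∧ m - 2 < 2 ^ n * ((m - 2) / 2 ^ n) + 2 ^ n
      ∧ 2 ≤ 2 ^ n := by
  have hN : 2 ≤ 2 ^ n := by
    calc (2:ℕ) = 2 ^ 1 := rfl
    _ ≤ 2 ^ n := Nat.pow_le_pow_right (by norm_num) hn
  have hdm := Nat.div_add_mod (m - 2) (2 ^ n)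
  have hmod := Nat.mod_lt (m - 2) (show 0 < 2 ^ n by omega)
  exact ⟨by omega, by omega, hN⟩

lemma exH_fiber_zero (hm : 2 ≤ m) (hn : 1 ≤ n) :
    (m - 2) / 2 ^ n + 1 ≤ (Finset.univ.filter (fun a : Fin m => exH m n a = 0)).card := by
  obtain ⟨hd1, hd2, hN⟩ := exH_facts hm hn
  set q := (m - 2) / 2 ^ n with hq
  have hqm : q ≤ m - 2 := by
    have : q ≤ 2 ^ n * q := Nat.le_mul_of_pos_left _ (by omega)
    omega
  refine exH_fiber_ge (by omega) 0 0 (q + 1) (by omega) ?_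
  intro t _ ht
  have htm : t < m := by omega
  show exHN m n (t % m) = 0
  rw [Nat.mod_eq_of_lt htm]
  unfold exHN
  rw [← hq]
  simp only [if_pos (show t ≤ q by omega)]

lemma exH_fiber_last (hm : 2 ≤ m) (hn : 1 ≤ n) :
    (m - 2) / 2 ^ n + 1 ≤
      (Finset.univ.filter (fun a : Fin m => exH m n a = 2 ^ n - 1)).card := by
  obtain ⟨hd1, hd2, hN⟩ := exH_facts hm hn
  set q := (m - 2) / 2 ^ n with hq
  have hkey : q * (2 ^ n - 1) + 1 + (q + 1) ≤ m := by
    have : q * (2 ^ n - 1) + q = q * 2 ^ n := by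
      have : q * (2 ^ n - 1) = q * 2 ^ n - q := by
        rw [Nat.mul_sub]
        omega
      have hle : q ≤ q * 2 ^ n := Nat.le_mul_of_pos_right _ (by omega)
      omega
    have h2 : q * 2 ^ n = 2 ^ n * q := Nat.mul_comm _ _
    omega
  refine exH_fiber_ge (by omega) (2 ^ n - 1) (q * (2 ^ n - 1) + 1) (q + 1) hkey ?_
  intro t ht1 ht2
  have htm : t < m := by omega
  show exHN m n (t % m) = 2 ^ n - 1
  rw [Nat.mod_eq_of_lt htm]
  unfold exHN
  rw [← hq]
  have hnle : ¬ (t ≤ q) := by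
    have : q ≤ q * (2 ^ n - 1) := Nat.le_mul_of_pos_right _ (by omega)
    omega
  rw [if_neg hnle, if_pos (by omega)]

lemma exH_fiber_mid (hm : 2 ≤ m) (hn : 1 ≤ n) (j : ℕ) (hj1 : 1 ≤ j) (hj2 : j ≤ 2 ^ n - 2) :
    (m - 2) / 2 ^ n ≤ (Finset.univ.filter (fun a : Fin m => exH m n a = j)).card := by
  obtain ⟨hd1, hd2, hN⟩ := exH_facts hm hn
  set q := (m - 2) / 2 ^ n with hq
  rcases Nat.eq_zero_or_pos q with hq0 | hqpos
  · omega
  have hjq : (j + 1) * q ≤ (2 ^ n - 1) * q := Nat.mul_le_mul_right _ (by omega)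
  have htop : (2 ^ n - 1) * q ≤ m - 2 := by
    have : (2 ^ n - 1) * q = 2 ^ n * q - q := by rw [Nat.sub_mul]; omega
    have hle : q ≤ 2 ^ n * q := Nat.le_mul_of_pos_left _ (by omega)
    omega
  have hexp : (j + 1) * q = j * q + q := by ring
  have hjq' : q ≤ j * q := Nat.le_mul_of_pos_left _ (by omega)
  refine exH_fiber_ge (by omega) j (j * q + 1) q (by omega) ?_
  intro t ht1 ht2
  have htm : t < m := by omega
  show exHN m n (t % m) = j
  rw [Nat.mod_eq_of_lt htm]
  unfold exHN
  rw [← hq]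
  have h1 : ¬ (t ≤ q) := by omega
  have h2 : ¬ (q * (2 ^ n - 1) < t) := by
    push_neg
    have hcm : q * (2 ^ n - 1) = (2 ^ n - 1) * q := Nat.mul_comm _ _
    omega
  rw [if_neg h1, if_neg h2]
  exact Nat.div_eq_of_lt_le (by omega) (by omega)

end Extremal

section Lower

open Sum SimpleGraph

variable {m n : ℕ}

lemma lower_main (hn : 1 ≤ n) (hm : 2 ≤ m)
    (P : Finset (Set (Fin m ⊕ Fin n))) (hP : IsMonoTreePartition (exC m n) P) :
    (m - 2) / 2 ^ n + 2 ≤ P.card := by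
  classical
  obtain ⟨hmono, huniq⟩ := hP
  set c0 := exC m n with hc0
  set tr : (Fin m ⊕ Fin n) → Set (Fin m ⊕ Fin n) := fun x => (huniq x).choose with htrdef
  have htr : ∀ x, tr x ∈ P ∧ x ∈ tr x := fun x => (huniq x).choose_spec.1
  have htru : ∀ x S, S ∈ P → x ∈ S → S = tr x :=
    fun x S h1 h2 => (huniq x).choose_spec.2 S ⟨h1, h2⟩
  set GC : Fin n → Prop :=
    fun b => ((biColorGraph c0 false).induce (tr (inr b))).Connected with hGCdef
  set pstar : Fin n → Bool := fun b => if GC b then true else false with hpsdef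
  have hps : ∀ b, GC b → pstar b = true := by
    intro b h; simp [hpsdef, h]
  have hpsf : ∀ b, ¬ GC b → pstar b = false := by
    intro b h; simp [hpsdef, h]
  have claim1 : ∀ a : Fin m, (∀ b, c0 a b = pstar b) → tr (inl a) = {inl a} := by
    intro a hpat
    have haT : inl a ∈ tr (inl a) := (htr _).2
    have hTP : tr (inl a) ∈ P := (htr _).1
    have hnoinr : ∀ b : Fin n, inr b ∉ tr (inl a) := by
      intro b hb
      have hTb : tr (inl a) = tr (inr b) := htru (inr b) _ hTP hb
      have hne : (⟨inl a, haT⟩ : ↥(tr (inl a))) ≠ ⟨inr b, hb⟩ := by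
        intro h
        simpa using congrArg Subtype.val h
      by_cases hgc : GC b
      · have hconn : ((biColorGraph c0 false).induce (tr (inl a))).Connected := by
          rw [hTb]; exact hgc
        obtain ⟨w, hw⟩ := exists_adj_of_preconnected hconn.preconnected hne
        obtain ⟨wv, hwM⟩ := w
        have hadj : (biColorGraph c0 false).Adj (inl a) wv := by simpa using hw
        cases wv with
        | inl a' => exact bcg_adj_inl_inl hadj
        | inr b' =>
          have hcb' : c0 a b' = false := by simpa using hadj
          have hTb' : tr (inl a) = tr (inr b') := htru (inr b') _ hTP hwM
          have hgc' : GC b' := by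
            show ((biColorGraph c0 false).induce (tr (inr b'))).Connected
            rw [← hTb']; exact hconn
          have h1 := hpat b'
          rw [hcb', hps b' hgc'] at h1
          exact absurd h1 (by simp)
      · obtain ⟨k, hconn⟩ := hmono _ hTP
        have hk : k = true := by
          cases k with
          | false => exact absurd (by rw [hTb] at hconn; exact hconn) hgc
          | true => rfl
        rw [hk] at hconn
        obtain ⟨w, hw⟩ := exists_adj_of_preconnected hconn.preconnected hne
        obtain ⟨wv, hwM⟩ := w
        have hadj : (biColorGraph c0 true).Adj (inl a) wv := by simpa using hw
        cases wv with
        | inl a' => exact bcg_adj_inl_inl hadj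
        | inr b' =>
          have hcb' : c0 a b' = true := by simpa using hadj
          have hTb' : tr (inl a) = tr (inr b') := htru (inr b') _ hTP hwM
          have hgc' : ¬ GC b' := by
            intro hg
            apply hgc
            show ((biColorGraph c0 false).induce (tr (inr b))).Connected
            rw [← hTb]
            have hgg : ((biColorGraph c0 false).induce (tr (inr b'))).Connected := hg
            rw [← hTb'] at hgg
            exact hgg
          have h1 := hpat b'
          rw [hcb', hpsf b' hgc'] at h1
          exact absurd h1 (by simp)
    refine Set.eq_singleton_iff_unique_mem.mpr ⟨haT, ?_⟩
    intro z hz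
    cases z with
    | inr b' => exact absurd hz (hnoinr b')
    | inl a' =>
      by_contra hne'
      obtain ⟨k, hconn⟩ := hmono _ hTP
      have hnee : (⟨inl a', hz⟩ : ↥(tr (inl a))) ≠ ⟨inl a, haT⟩ := by
        intro h
        exact hne' (congrArg Subtype.val h)
      obtain ⟨w, hw⟩ := exists_adj_of_preconnected hconn.preconnected hnee
      obtain ⟨wv, hwM⟩ := w
      have hadj : (biColorGraph c0 k).Adj (inl a') wv := by simpa using hw
      cases wv with
      | inl a'' => exact bcg_adj_inl_inl hadj
      | inr b'' => exact absurd hwM (hnoinr b'')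
  -- the uncoverable colour class, as a Finset
  set Fp : Finset (Fin m) := Finset.univ.filter (fun a => ∀ b, c0 a b = pstar b) with hFp
  set SingF : Finset (Set (Fin m ⊕ Fin n)) :=
    Fp.image (fun a => ({inl a} : Set (Fin m ⊕ Fin n))) with hSingF
  have hSingSub : SingF ⊆ P := by
    intro S hS
    simp only [hSingF, Finset.mem_image] at hS
    obtain ⟨a, ha, rfl⟩ := hS
    simp only [hFp, Finset.mem_filter] at ha
    rw [← claim1 a ha.2]
    exact (htr _).1
  have hSingCard : SingF.card = Fp.card := by
    rw [hSingF]
    refine Finset.card_image_of_injective _ ?_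
    intro a a' h
    simpa [Set.singleton_eq_singleton_iff] using h
  have hSingNoInr : ∀ (b : Fin n), tr (inr b) ∉ SingF := by
    intro b hmem
    simp only [hSingF, Finset.mem_image] at hmem
    obtain ⟨a, _, ha⟩ := hmem
    have : inr b ∈ ({inl a} : Set (Fin m ⊕ Fin n)) := ha ▸ (htr (inr b)).2
    simp at this
  -- fiber inclusion machinery
  set q := (m - 2) / 2 ^ n with hq
  have hfib : ∀ v : ℕ, (∀ b : Fin n, v.testBit b.val = pstar b) →
      (Finset.univ.filter (fun a : Fin m => exH m n a = v)).card ≤ Fp.card := by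
    intro v hv
    refine Finset.card_le_card ?_
    intro a ha
    simp only [Finset.mem_filter, Finset.mem_univ, true_and] at ha
    simp only [hFp, Finset.mem_filter, Finset.mem_univ, true_and]
    intro b
    show exC m n a b = pstar b
    unfold exC
    rw [ha]
    exact hv b
  by_cases hall : ∀ b, GC b
  · -- all green: pstar = const true
    have hvt : ∀ b : Fin n, (2 ^ n - 1).testBit b.val = pstar b := by
      intro b
      rw [Nat.testBit_two_pow_sub_one, hps b (hall b)]
      simp [b.2]
    have hcard1 : q + 1 ≤ Fp.card := le_trans (exH_fiber_last hm hn) (hfib _ hvt)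
    set T1 := tr (inr ⟨0, hn⟩) with hT1
    have hsub : insert T1 SingF ⊆ P := by
      intro S hS
      rcases Finset.mem_insert.mp hS with rfl | hS
      · exact (htr _).1
      · exact hSingSub hS
    have hcard2 : (insert T1 SingF).card = SingF.card + 1 :=
      Finset.card_insert_of_notMem (hSingNoInr _)
    have := Finset.card_le_card hsub
    omega
  · push_neg at hall
    obtain ⟨b2, hb2⟩ := hall
    by_cases hnone : ∀ b, ¬ GC b
    · -- none green: pstar = const false
      have hvt : ∀ b : Fin n, (0 : ℕ).testBit b.val = pstar b := by
        intro b
        rw [Nat.zero_testBit, hpsf b (hnone b)]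
      have hcard1 : q + 1 ≤ Fp.card := le_trans (exH_fiber_zero hm hn) (hfib _ hvt)
      set T1 := tr (inr ⟨0, hn⟩) with hT1
      have hsub : insert T1 SingF ⊆ P := by
        intro S hS
        rcases Finset.mem_insert.mp hS with rfl | hS
        · exact (htr _).1
        · exact hSingSub hS
      have hcard2 : (insert T1 SingF).card = SingF.card + 1 :=
        Finset.card_insert_of_notMem (hSingNoInr _)
      have := Finset.card_le_card hsub
      omega
    · push_neg at hnone
      obtain ⟨b1, hb1⟩ := hnone
      -- middle pattern
      set f : ℕ → Bool := fun i => if h : i < n then pstar ⟨i, h⟩ else false with hf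
      set v := patVal f n with hv
      have hvt : ∀ b : Fin n, v.testBit b.val = pstar b := by
        intro b
        rw [hv, testBit_patVal f n b.2, hf]
        simp [b.2]
      have hvlt : v < 2 ^ n := patVal_lt f n
      have hvne0 : v ≠ 0 := by
        intro h0
        have := hvt b1
        rw [h0, Nat.zero_testBit, hps b1 hb1] at this
        exact absurd this (by simp)
      have hvnelast : v ≠ 2 ^ n - 1 := by
        intro hlast
        have := hvt b2
        rw [hlast, Nat.testBit_two_pow_sub_one, hpsf b2 hb2] at this
        simp [b2.2] at this
      have hcard1 : q ≤ Fp.card :=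
        le_trans (exH_fiber_mid hm hn v (by omega) (by omega)) (hfib _ hvt)
      set T1 := tr (inr b1) with hT1
      set T2 := tr (inr b2) with hT2
      have hT12 : T1 ≠ T2 := by
        intro h
        apply hb2
        show ((biColorGraph c0 false).induce (tr (inr b2))).Connected
        rw [← hT2, ← h, hT1]
        exact hb1
      have hsub : insert T1 (insert T2 SingF) ⊆ P := by
        intro S hS
        rcases Finset.mem_insert.mp hS with rfl | hS
        · exact (htr _).1
        rcases Finset.mem_insert.mp hS with rfl | hS
        · exact (htr _).1
        · exact hSingSub hS
      have hcard2 : (insert T1 (insert T2 SingF)).card = SingF.card + 2 := by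
        rw [Finset.card_insert_of_notMem, Finset.card_insert_of_notMem (hSingNoInr b2)]
        intro hmem
        rcases Finset.mem_insert.mp hmem with h | h
        · exact hT12 h
        · exact hSingNoInr b1 h
      have := Finset.card_le_card hsub
      omega

end Lower

section Assemble

open Sum

variable {m n : ℕ}

lemma hasMono_mono {α β : Type*} {c : α → β → Bool} {j k : ℕ}
    (h : HasMonoTreePartition c j) (hjk : j ≤ k) : HasMonoTreePartition c k := by
  obtain ⟨P, hP, hc⟩ := h
  exact ⟨P, hP, hc.trans hjk⟩

lemma K_eq_one (hm : m = 1) (hn : 1 ≤ n) (hnm : n ≤ m) :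
    ((((m : ℤ) - 2).fdiv (2 ^ n) + 2).toNat) = 1 := by
  subst hm
  have hn1 : n = 1 := by omega
  subst hn1
  have h1 : ((1 : ℕ) : ℤ) - 2 = -1 := by norm_num
  rw [h1]
  decide

lemma K_pos (hn : 1 ≤ n) (hnm : n ≤ m) :
    1 ≤ ((((m : ℤ) - 2).fdiv (2 ^ n) + 2).toNat) := by
  rcases le_or_gt 2 m with hm | hm
  · rw [K_eq_of_two_le hm]
    generalize (m - 2) / 2 ^ n = u
    omega
  · rw [K_eq_one (by omega) hn hnm]

lemma upper_main (hn : 1 ≤ n) (hnm : n ≤ m) (c : Fin m → Fin n → Bool) :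
    HasMonoTreePartition c ((((m : ℤ) - 2).fdiv (2 ^ n) + 2).toNat) := by
  have hm1 : 1 ≤ m := hn.trans hnm
  have hK1 := K_pos hn hnm
  have hK2 : 2 ≤ m → 2 ≤ ((((m : ℤ) - 2).fdiv (2 ^ n) + 2).toNat) := by
    intro hm
    rw [K_eq_of_two_le hm]
    generalize (m - 2) / 2 ^ n = u
    omega
  by_cases hX : (∃ x, ∀ b, c x b = true) ∨ (∃ y, ∀ a, c a y = true)
  · by_cases hY : (∃ x, ∀ b, c x b = false) ∨ (∃ y, ∀ a, c a y = false)
    · -- S-type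
      obtain ⟨x, hx⟩ | ⟨yb, hyb⟩ := hX <;> obtain ⟨y, hy⟩ | ⟨yg, hyg⟩ := hY
      · -- both monochromatic vertices in A
        have hxy : x ≠ y := by
          intro h
          have h1 := hx ⟨0, hn⟩
          have h2 := hy ⟨0, hn⟩
          rw [h] at h1
          rw [h1] at h2
          exact absurd h2 (by simp)
        have hm2 : 2 ≤ m := by
          by_contra hc2
          exact hxy (Fin.ext (by omega))
        rw [K_eq_of_two_le hm2]
        rcases pigeonhole_classes c hn hm2 with ⟨p, ⟨bb1, hbb1⟩, ⟨bb0, hbb0⟩, hcard⟩ | hcF | hcT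
        · exact hasMono_mono
            (upper_mid c x y hx hy p bb1 bb0 hbb1 hbb0 ((m - 2) / 2 ^ n) hcard) (by omega)
        · exact hasMono_mono
            (upper_ext c true (by omega) x hx ((m - 2) / 2 ^ n + 1) hcF) (by omega)
        · exact hasMono_mono
            (upper_ext c false (by omega) y hy ((m - 2) / 2 ^ n + 1) hcT) (by omega)
      · exact absurd ((hyg x).symm.trans (hx yg)) (by simp)
      · exact absurd ((hy yb).symm.trans (hyb y)) (by simp)
      · -- both monochromatic vertices in B
        have hne : yb ≠ yg := by
          intro h
          have h1 := hyb ⟨0, by omega⟩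
          have h2 := hyg ⟨0, by omega⟩
          rw [h] at h1
          rw [h1] at h2
          exact absurd h2 (by simp)
        have hn2 : 2 ≤ n := by
          by_contra hc2
          exact hne (Fin.ext (by omega))
        have hm2 : 2 ≤ m := by omega
        exact hasMono_mono (upper_4b c hm2 hnm yb hyb) (hK2 hm2)
    · -- no green monochromatic vertex
      push_neg at hY
      obtain ⟨hY1, hY2⟩ := hY
      have hedgeA : ∀ a, ∃ b, c a b = true := by
        intro a
        obtain ⟨b, hb⟩ := hY1 a
        exact ⟨b, by simpa using bool_ne_iff'.mp hb⟩
      have hedgeB : ∀ b, ∃ a, c a b = true := by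
        intro b
        obtain ⟨a, ha⟩ := hY2 b
        exact ⟨a, by simpa using bool_ne_iff'.mp ha⟩
      exact hasMono_mono (upper_one c true hX hedgeA hedgeB) hK1
  · by_cases hY : (∃ x, ∀ b, c x b = false) ∨ (∃ y, ∀ a, c a y = false)
    · -- no blue monochromatic vertex
      push_neg at hX
      obtain ⟨hX1, hX2⟩ := hX
      have hedgeA : ∀ a, ∃ b, c a b = false := by
        intro a
        obtain ⟨b, hb⟩ := hX1 a
        exact ⟨b, bool_ne_iff'.mp hb⟩
      have hedgeB : ∀ b, ∃ a, c a b = false := by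
        intro b
        obtain ⟨a, ha⟩ := hX2 b
        exact ⟨a, bool_ne_iff'.mp ha⟩
      exact hasMono_mono (upper_one c false hY hedgeA hedgeB) hK1
    · -- no monochromatic vertex at all
      push_neg at hX hY
      obtain ⟨hX1, hX2⟩ := hX
      obtain ⟨hY1, hY2⟩ := hY
      have hedgeAb : ∀ a, ∃ b, c a b = true := by
        intro a
        obtain ⟨b, hb⟩ := hY1 a
        exact ⟨b, by simpa using bool_ne_iff'.mp hb⟩
      have hedgeBb : ∀ b, ∃ a, c a b = true := by
        intro b
        obtain ⟨a, ha⟩ := hY2 b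
        exact ⟨a, by simpa using bool_ne_iff'.mp ha⟩
      have hedgeAg : ∀ a, ∃ b, c a b = false := by
        intro a
        obtain ⟨b, hb⟩ := hX1 a
        exact ⟨b, bool_ne_iff'.mp hb⟩
      have hedgeBg : ∀ b, ∃ a, c a b = false := by
        intro b
        obtain ⟨a, ha⟩ := hX2 b
        exact ⟨a, bool_ne_iff'.mp ha⟩
      have hm2 : 2 ≤ m := by
        obtain ⟨b1, hb1⟩ := hedgeAb ⟨0, by omega⟩
        obtain ⟨b2, hb2⟩ := hedgeAg ⟨0, by omega⟩
        have : b1 ≠ b2 := by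
          intro h
          rw [h, hb2] at hb1
          exact absurd hb1 (by simp)
        have hn2 : 2 ≤ n := by
          by_contra hc2
          exact this (Fin.ext (by omega))
        omega
      exact hasMono_mono
        (upper_two_of_noXY c (by omega) hedgeAb hedgeBb hedgeAg hedgeBg) (hK2 hm2)

lemma t2_complete_bipartite_aux (m n : ℕ) (h1 : 1 ≤ n) (h2 : n ≤ m) :
    IsLeast {k : ℕ | ∀ c : Fin m → Fin n → Bool, HasMonoTreePartition c k}
      ((((m : ℤ) - 2).fdiv (2 ^ n) + 2).toNat) := by
  constructor
  · intro c
    exact upper_main h1 h2 c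
  · intro k hk
    obtain ⟨P, hP, hPc⟩ := hk (exC m n)
    rcases le_or_gt 2 m with hm2 | hm2
    · rw [K_eq_of_two_le hm2]
      exact le_trans (lower_main h1 hm2 P hP) hPc
    · rw [K_eq_one (by omega) h1 h2]
      have hPne : P.Nonempty := by
        obtain ⟨S, ⟨hS, _⟩, -⟩ := hP.2 (inl ⟨0, by omega⟩)
        exact ⟨S, hS⟩
      have := Finset.card_pos.mpr hPne
      omega

end Assemble

/-- **Kaneko–Kano–Suzuki.** For `1 ≤ n ≤ m`, the monochromatic tree
partition number of 2-edge-colored `K(m,n)` is `⌊(m - 2) / 2^n⌋ + 2` (floor division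
over the integers). -/
theorem t2_complete_bipartite (m n : ℕ) (h1 : 1 ≤ n) (h2 : n ≤ m) :
    IsLeast {k : ℕ | ∀ c : Fin m → Fin n → Bool, HasMonoTreePartition c k}
      ((((m : ℤ) - 2).fdiv (2 ^ n) + 2).toNat) := by
  exact t2_complete_bipartite_aux m n h1 h2
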